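/- For λ ∈ ℝ^n and the vector e = (1,…,1) ∈ ℝ^n, the polarization identity S̃_k(λ,…,λ,e,…,e) = S_m(λ), where λ appears m times and e appears k−m times, holds with the normalized elementary symmetric functions S_j(λ) = (j!(n−j)!/n!) Σ_{i₁<…<i_j} λ_{i₁}⋯λ_{i_j}. -/

import Mathlib

open Finset

noncomputable section

/-- The normalized `k`-th elementary symmetric function on `ℝⁿ`:
`S_k(λ) = (k!(n−k)!/n!) Σ_{i₁<…<i_k} λ_{i₁}⋯λ_{i_k}`. -/
def normESymm (n k : ℕ) (l : Fin n → ℝ) : ℝ :=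
  ((k.factorial * (n - k).factorial : ℕ) : ℝ) / (n.factorial : ℕ) *
    ∑ s ∈ Finset.univ.powersetCard k, ∏ i ∈ s, l i

/-- The Gårding cone `Γ_k = {λ : S_j(λ) ≥ 0, j = 1,…,k}`. -/
def gardingCone (n k : ℕ) : Set (Fin n → ℝ) :=
  {l | ∀ j : ℕ, 1 ≤ j → j ≤ k → 0 ≤ normESymm n j l}

/-- The complete polarization `S̃_k` of the normalized elementary symmetric function:
the unique symmetric multilinear function with `S̃_k(λ,…,λ) = S_k(λ)`. -/
def polarESymm (n k : ℕ) (v : Fin k → Fin n → ℝ) : ℝ :=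
  ((k.factorial * (n - k).factorial : ℕ) : ℝ) / (n.factorial : ℕ) *
    ((1 : ℝ) / (k.factorial : ℕ)) * ∑ f : Fin k ↪ Fin n, ∏ a : Fin k, v a (f a)


lemma sum_embedding_prod (n m : ℕ) (l : Fin n → ℝ) :
    ∑ g : Fin m ↪ Fin n, ∏ a : Fin m, l (g a) =
      (m.factorial : ℝ) * ∑ s ∈ Finset.univ.powersetCard m, ∏ i ∈ s, l i := by
  classical
  have key : ∑ s ∈ (Finset.univ : Finset (Fin n)).powersetCard m,
      ∑ g ∈ Finset.univ.filter (fun g : Fin m ↪ Fin n => Finset.univ.map g = s),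
        ∏ a : Fin m, l (g a) = ∑ g : Fin m ↪ Fin n, ∏ a : Fin m, l (g a) := by
    apply Finset.sum_fiberwise_of_maps_to
    intro g _
    simp [Finset.mem_powersetCard_univ]
  rw [← key, Finset.mul_sum]
  refine Finset.sum_congr rfl fun s hs => ?_
  have hcard : s.card = m := (Finset.mem_powersetCard_univ).1 hs
  have hterm : ∀ g ∈ Finset.univ.filter (fun g : Fin m ↪ Fin n => Finset.univ.map g = s),
      ∏ a : Fin m, l (g a) = ∏ i ∈ s, l i := by
    intro g hg
    have : Finset.univ.map g = s := (Finset.mem_filter.1 hg).2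
    rw [← this, Finset.prod_map]
  rw [Finset.sum_congr rfl hterm, Finset.sum_const, nsmul_eq_mul]
  congr 1
  -- cardinality of the fiber is m!
  have hsub : (Finset.univ.filter (fun g : Fin m ↪ Fin n => Finset.univ.map g = s)).card
      = Fintype.card {g : Fin m ↪ Fin n // Finset.univ.map g = s} := by
    rw [Fintype.card_subtype]
  have hequiv : {g : Fin m ↪ Fin n // Finset.univ.map g = s} ≃ (Fin m ↪ (s : Finset (Fin n))) := by
    refine (Equiv.subtypeEquivProp ?_).trans (Equiv.codRestrict (Fin m) (↑s : Set (Fin n)))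
    ext g
    constructor
    · rintro rfl a
      simp
    · intro h
      have hsub2 : Finset.univ.map g ⊆ s := by
        intro i hi
        obtain ⟨a, _, rfl⟩ := Finset.mem_map.1 hi
        exact_mod_cast h a
      refine Finset.eq_of_subset_of_card_le hsub2 ?_
      simp [hcard]
  rw [hsub, Fintype.card_congr hequiv, Fintype.card_embedding_eq]
  simp [hcard, Nat.descFactorial_self]

lemma sum_embedding_split (n k m : ℕ) (hmk : m ≤ k) (l : Fin n → ℝ) :
    ∑ f : Fin k ↪ Fin n, ∏ a : Fin k, (if (a : ℕ) < m then l else fun _ => (1 : ℝ)) (f a)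
      = ((n - m).descFactorial (k - m) : ℝ) * ∑ g : Fin m ↪ Fin n, ∏ a : Fin m, l (g a) := by
  classical
  have hk : m + (k - m) = k := by omega
  let e : Fin m ⊕ Fin (k - m) ≃ Fin k := finSumFinEquiv.trans (finCongr hk)
  let E : (Fin m ⊕ Fin (k - m) ↪ Fin n) ≃ (Fin k ↪ Fin n) :=
    Equiv.embeddingCongr e (Equiv.refl _)
  rw [← Equiv.sum_comp E (fun f : Fin k ↪ Fin n =>
    ∏ a : Fin k, (if (a : ℕ) < m then l else fun _ => (1 : ℝ)) (f a))]
  have hprod : ∀ f' : Fin m ⊕ Fin (k - m) ↪ Fin n,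
      ∏ a : Fin k, (if (a : ℕ) < m then l else fun _ => (1 : ℝ)) ((E f') a)
        = ∏ a : Fin m, l (f' (Sum.inl a)) := by
    intro f'
    rw [← Equiv.prod_comp e (fun a : Fin k =>
      (if (a : ℕ) < m then l else fun _ => (1 : ℝ)) ((E f') a))]
    rw [Fintype.prod_sum_type]
    have h1 : ∀ a : Fin m, ((e (Sum.inl a) : Fin k) : ℕ) = (a : ℕ) := by
      intro a; simp [e]
    have h2 : ∀ b : Fin (k - m), ((e (Sum.inr b) : Fin k) : ℕ) = m + (b : ℕ) := by
      intro b; simp [e]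
    have hE : ∀ x, (E f') (e x) = f' x := by
      intro x
      simp [E, Equiv.embeddingCongr]
    calc (∏ a : Fin m, (if ((e (Sum.inl a) : Fin k) : ℕ) < m then l else fun _ => (1:ℝ))
            ((E f') (e (Sum.inl a)))) *
          ∏ b : Fin (k - m), (if ((e (Sum.inr b) : Fin k) : ℕ) < m then l else fun _ => (1:ℝ))
            ((E f') (e (Sum.inr b)))
        = (∏ a : Fin m, l (f' (Sum.inl a))) * ∏ _b : Fin (k - m), (1 : ℝ) := by
          congr 1
          · refine Finset.prod_congr rfl fun a _ => ?_
            rw [h1, if_pos a.isLt, hE]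
          · refine Finset.prod_congr rfl fun b _ => ?_
            rw [h2, if_neg (by omega)]
      _ = ∏ a : Fin m, l (f' (Sum.inl a)) := by simp
  simp_rw [hprod]
  -- now use the sigma equivalence
  have hsig : (∑ x : Fin m ⊕ Fin (k - m) ↪ Fin n, ∏ a : Fin m, l (x (Sum.inl a)))
      = ∑ p : Σ g : Fin m ↪ Fin n, (Fin (k - m) ↪ ↥(Set.range g)ᶜ), ∏ a : Fin m, l (p.1 a) :=
    Fintype.sum_equiv (Equiv.sumEmbeddingEquivSigmaEmbeddingRestricted) _ _ (fun f' => rfl)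
  rw [hsig]
  rw [← Finset.univ_sigma_univ, Finset.sum_sigma]
  rw [Finset.mul_sum]
  refine Finset.sum_congr rfl fun g _ => ?_
  dsimp only
  rw [Finset.sum_const, nsmul_eq_mul]
  congr 2
  rw [Finset.card_univ, Fintype.card_embedding_eq]
  congr 1
  · rw [Fintype.card_compl_set, Set.card_range_of_injective g.injective]
    simp
  · simp

/-- Polarization identity: `S̃_k(λ,…,λ,e,…,e) = S_m(λ)` where `λ` appears
`m` times and `e = (1,…,1)` appears `k−m` times. -/
theorem polarESymm_ones (n k m : ℕ) (hmk : m ≤ k) (hkn : k ≤ n) (l : Fin n → ℝ) :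
    polarESymm n k (fun a => if (a : ℕ) < m then l else fun _ => (1 : ℝ)) =
      normESymm n m l := by
  unfold polarESymm normESymm
  rw [sum_embedding_split n k m hmk l, sum_embedding_prod n m l]
  have hnat : (n - k).factorial * (n - m).descFactorial (k - m) = (n - m).factorial := by
    have h := Nat.factorial_mul_descFactorial (show k - m ≤ n - m by omega)
    rwa [show n - m - (k - m) = n - k by omega] at h
  have h1 : (k.factorial : ℝ) ≠ 0 := Nat.cast_ne_zero.2 k.factorial_pos.ne'
  have h2 : (n.factorial : ℝ) ≠ 0 := Nat.cast_ne_zero.2 n.factorial_pos.ne'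
  have hD : (((n - k).factorial : ℕ) : ℝ) * (((n - m).descFactorial (k - m) : ℕ) : ℝ)
      = (((n - m).factorial : ℕ) : ℝ) := by exact_mod_cast congrArg (Nat.cast (R := ℝ)) hnat
  push_cast
  field_simp
  linear_combination (∑ s ∈ Finset.univ.powersetCard m, ∏ i ∈ s, l i) * hD


end
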